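/- If H : Δ → ℝ satisfies generalized Shannon additivity with parameter α > 0, α ≠ 1, α ≠ 2, then H(p₁,...,pₙ) = H(1/2,1/2)·(1 − Σᵢ pᵢ^α)/(1 − 2^{1−α}) for all n and all (p₁,...,pₙ) ∈ Δₙ; i.e., H is a scalar multiple of the Tsallis entropy. -/

import Mathlib

open Real

/-- A finite stochastic vector: nonnegative entries summing to 1. -/
def IsStochastic (l : List ℝ) : Prop :=
  (∀ x ∈ l, 0 ≤ x) ∧ l.sum = 1

/-- Generalized Shannon additivity with parameter `α`: merging two adjacent
components of a stochastic vector. Powers are real powers (`rpow`). -/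
def GSA (α : ℝ) (H : List ℝ → ℝ) : Prop :=
  ∀ (l₁ l₂ : List ℝ) (a b : ℝ), IsStochastic (l₁ ++ a :: b :: l₂) → 0 < a + b →
    H (l₁ ++ a :: b :: l₂) =
      H (l₁ ++ (a + b) :: l₂) + (a + b) ^ α * H [a / (a + b), b / (a + b)]

theorem stmt_13 (α : ℝ) (hα : 0 < α) (hα1 : α ≠ 1) (hα2 : α ≠ 2)
    (H : List ℝ → ℝ) (hH : GSA α H)
    (l : List ℝ) (hl : IsStochastic l) :
    H l = H [1/2, 1/2] * (1 - (l.map fun p => p ^ α).sum) / (1 - (2 : ℝ) ^ (1 - α)) := by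
  have two_pos : (0:ℝ) < 2 := by norm_num
  have hinj : ∀ r s : ℝ, (2:ℝ) ^ r = (2:ℝ) ^ s → r = s := by
    intro r s hrs
    by_contra hne
    rcases Ne.lt_or_gt hne with hlt | hlt
    · exact absurd hrs (ne_of_lt ((Real.rpow_lt_rpow_left_iff (by norm_num)).mpr hlt))
    · exact absurd hrs (ne_of_gt ((Real.rpow_lt_rpow_left_iff (by norm_num)).mpr hlt))
  have hw_pos : (0:ℝ) < (2:ℝ) ^ α := Real.rpow_pos_of_pos two_pos α
  have hhalf : ((1:ℝ)/2) ^ α = ((2:ℝ) ^ α)⁻¹ := by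
    rw [one_div, Real.inv_rpow (by norm_num : (0:ℝ) ≤ 2)]
  have hhne : ((1:ℝ)/2) ^ α ≠ 1 := by
    rw [hhalf]
    intro h
    have h1 : (2:ℝ) ^ α = 1 := by
      have := congrArg (fun z : ℝ => z⁻¹) h
      simpa using this
    exact hα.ne' (hinj α 0 (by rw [Real.rpow_zero]; exact h1))
  set κ := 1 - (2:ℝ) ^ (1 - α) with hκ
  clear_value κ
  have hκ0 : κ ≠ 0 := by
    rw [hκ]
    intro h
    have h1 : (2:ℝ) ^ (1 - α) = 1 := by linarith
    have h2 := hinj (1-α) 0 (by rw [Real.rpow_zero]; exact h1)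
    exact hα1 (by linarith)
  set c := H [1/2, 1/2] with hc
  clear_value c
  set D : List ℝ → ℝ := fun m => H m - c * (1 - (m.map fun p => p ^ α).sum) / κ with hDdef
  clear_value D
  -- GSA for D
  have hDGSA : ∀ (l₁ l₂ : List ℝ) (a b : ℝ), IsStochastic (l₁ ++ a :: b :: l₂) → 0 < a + b →
      D (l₁ ++ a :: b :: l₂) = D (l₁ ++ (a + b) :: l₂) + (a + b) ^ α * D [a/(a+b), b/(a+b)] := by
    intro l₁ l₂ a b hs hab
    have ha : 0 ≤ a := hs.1 a (by simp)
    have hb : 0 ≤ b := hs.1 b (by simp)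
    have hRne : (a + b) ^ α ≠ 0 := (Real.rpow_pos_of_pos hab α).ne'
    have hH' := hH l₁ l₂ a b hs hab
    simp only [hDdef, List.map_append, List.map_cons, List.map_nil, List.sum_append,
      List.sum_cons, List.sum_nil]
    rw [hH', Real.div_rpow ha hab.le, Real.div_rpow hb hab.le]
    field_simp
    ring
  -- basic vanishing facts
  have hst0 : IsStochastic ([] ++ (0:ℝ) :: (1/2:ℝ) :: [(1/2:ℝ)]) := by
    constructor
    · intro y hy
      simp only [List.nil_append, List.mem_cons, List.not_mem_nil, or_false] at hy
      rcases hy with rfl | rfl | rfl <;> norm_num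
    · simp only [List.nil_append, List.sum_cons, List.sum_nil]; norm_num
  have hstA : IsStochastic ([(0:ℝ)] ++ (1/2:ℝ) :: (1/2:ℝ) :: []) := by
    constructor
    · intro y hy
      simp only [List.cons_append, List.nil_append, List.mem_cons, List.not_mem_nil,
        or_false] at hy
      rcases hy with rfl | rfl | rfl <;> norm_num
    · simp only [List.cons_append, List.nil_append, List.sum_cons, List.sum_nil]; norm_num
  have hf0 : D [(0:ℝ), 1] = 0 := by
    have e1 := hDGSA [] [(1/2:ℝ)] 0 (1/2) hst0 (by norm_num)
    have e2 := hDGSA [(0:ℝ)] [] (1/2) (1/2) hstA (by norm_num)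
    simp only [List.nil_append, List.cons_append] at e1 e2
    rw [show (0:ℝ) + 1/2 = 1/2 from by norm_num] at e1
    rw [show (0:ℝ) / (1/2) = 0 from by norm_num,
      show ((1:ℝ)/2) / (1/2) = 1 from by norm_num] at e1
    rw [show (1:ℝ)/2 + 1/2 = 1 from by norm_num, show ((1:ℝ)/2)/1 = 1/2 from by norm_num,
      Real.one_rpow] at e2
    have key : (((1:ℝ)/2) ^ α - 1) * D [(0:ℝ), 1] = 0 := by linear_combination e2 - e1
    rcases mul_eq_zero.mp key with h | h
    · exact absurd (sub_eq_zero.mp h) hhne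
    · exact h
  have hstB : IsStochastic ([] ++ (1/2:ℝ) :: (1/2:ℝ) :: [(0:ℝ)]) := by
    constructor
    · intro y hy
      simp only [List.nil_append, List.mem_cons, List.not_mem_nil, or_false] at hy
      rcases hy with rfl | rfl | rfl <;> norm_num
    · simp only [List.nil_append, List.sum_cons, List.sum_nil]; norm_num
  have hstB' : IsStochastic ([(1/2:ℝ)] ++ (1/2:ℝ) :: (0:ℝ) :: []) := by
    constructor
    · intro y hy
      simp only [List.cons_append, List.nil_append, List.mem_cons, List.not_mem_nil,
        or_false] at hy
      rcases hy with rfl | rfl | rfl <;> norm_num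
    · simp only [List.cons_append, List.nil_append, List.sum_cons, List.sum_nil]; norm_num
  have hf1 : D [(1:ℝ), 0] = 0 := by
    have e1 := hDGSA [] [(0:ℝ)] (1/2) (1/2) hstB (by norm_num)
    have e2 := hDGSA [(1/2:ℝ)] [] (1/2) 0 hstB' (by norm_num)
    simp only [List.nil_append, List.cons_append] at e1 e2
    rw [show (1:ℝ)/2 + 1/2 = 1 from by norm_num, show ((1:ℝ)/2)/1 = 1/2 from by norm_num,
      Real.one_rpow] at e1
    rw [show (1:ℝ)/2 + 0 = 1/2 from by norm_num, show ((1:ℝ)/2)/(1/2) = 1 from by norm_num,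
      show (0:ℝ)/(1/2) = 0 from by norm_num] at e2
    have key : (((1:ℝ)/2) ^ α - 1) * D [(1:ℝ), 0] = 0 := by linear_combination e1 - e2
    rcases mul_eq_zero.mp key with h | h
    · exact absurd (sub_eq_zero.mp h) hhne
    · exact h
  have hst10 : IsStochastic ([] ++ (1:ℝ) :: (0:ℝ) :: []) := by
    constructor
    · intro y hy
      simp only [List.nil_append, List.mem_cons, List.not_mem_nil, or_false] at hy
      rcases hy with rfl | rfl <;> norm_num
    · simp only [List.nil_append, List.sum_cons, List.sum_nil]; norm_num
  have hD1 : D [(1:ℝ)] = 0 := by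
    have e := hDGSA [] [] 1 0 hst10 (by norm_num)
    simp only [List.nil_append] at e
    rw [show (1:ℝ) + 0 = 1 from by norm_num, show (1:ℝ)/1 = 1 from by norm_num,
      show (0:ℝ)/1 = 0 from by norm_num, Real.one_rpow] at e
    linarith [e]
  have hD2 : D [(1:ℝ)/2, 1/2] = 0 := by
    have hnum : (1:ℝ) - (((1:ℝ)/2) ^ α + (((1:ℝ)/2) ^ α + 0)) = κ := by
      rw [hκ, hhalf, sub_eq_add_neg (1:ℝ) α, Real.rpow_add two_pos, Real.rpow_one,
        Real.rpow_neg two_pos.le]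
      ring
    simp only [hDdef, List.map_cons, List.map_nil, List.sum_cons, List.sum_nil]
    rw [hnum, ← hc, mul_div_assoc, div_self hκ0, mul_one, sub_self]
  -- the fundamental functional equation
  set f : ℝ → ℝ := fun z => D [z, 1 - z] with hfdef
  clear_value f
  have star : ∀ p t : ℝ, 0 < p → p ≤ 1 → 0 ≤ t → t ≤ 1 → p * t < 1 →
      f p + p ^ α * f t
        = f (p * t) + (1 - p * t) ^ α * f (p * (1 - t) / (1 - p * t)) := by
    intro p t hp hp1 ht ht1 hpt
    have hpt0 : (0:ℝ) < 1 - p * t := by linarith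
    have h1 : IsStochastic ([] ++ (p * t) :: (p * (1 - t)) :: [1 - p]) := by
      constructor
      · intro y hy
        simp only [List.nil_append, List.mem_cons, List.not_mem_nil, or_false] at hy
        rcases hy with rfl | rfl | rfl
        · exact mul_nonneg hp.le ht
        · exact mul_nonneg hp.le (by linarith)
        · linarith
      · simp only [List.nil_append, List.sum_cons, List.sum_nil]; ring
    have h2 : IsStochastic ([p * t] ++ (p * (1 - t)) :: (1 - p) :: []) := by
      constructor
      · intro y hy
        simp only [List.cons_append, List.nil_append, List.mem_cons, List.not_mem_nil,
          or_false] at hy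
        rcases hy with rfl | rfl | rfl
        · exact mul_nonneg hp.le ht
        · exact mul_nonneg hp.le (by linarith)
        · linarith
      · simp only [List.cons_append, List.nil_append, List.sum_cons, List.sum_nil]; ring
    have e1 := hDGSA [] [1 - p] (p * t) (p * (1 - t)) h1
      (by rw [show p * t + p * (1 - t) = p from by ring]; exact hp)
    have e2 := hDGSA [p * t] [] (p * (1 - t)) (1 - p) h2
      (by rw [show p * (1 - t) + (1 - p) = 1 - p * t from by ring]; exact hpt0)
    simp only [List.nil_append, List.cons_append] at e1 e2
    rw [show p * t + p * (1 - t) = p from by ring] at e1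
    rw [show p * t / p = t from by rw [mul_comm, mul_div_assoc, div_self hp.ne', mul_one],
      show p * (1 - t) / p = 1 - t from by
        rw [mul_comm, mul_div_assoc, div_self hp.ne', mul_one]] at e1
    rw [show p * (1 - t) + (1 - p) = 1 - p * t from by ring] at e2
    rw [show (1 - p) / (1 - p * t) = 1 - p * (1 - t) / (1 - p * t) from by
      rw [eq_sub_iff_add_eq, ← add_div,
        show 1 - p + p * (1 - t) = 1 - p * t from by ring, div_self hpt0.ne']] at e2
    simp only [hfdef]
    linear_combination e2 - e1
  -- the key asymmetry relation
  have hswap : ∀ y : ℝ, 0 < y → y < 1 → f y = (3 - (2:ℝ) ^ α) * f (1 - y) := by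
    intro y hy0 hy1
    have h1y : (0:ℝ) < 1 + y := by linarith
    have hy0 : (0:ℝ) < y := hy0
    have hfhalf : f ((1:ℝ)/2) = 0 := by
      simp only [hfdef]
      rw [show (1:ℝ) - 1/2 = 1/2 from by norm_num]
      exact hD2
    have E1 := star (1/(1+y)) y (div_pos one_pos h1y) (by rw [div_le_one h1y]; linarith)
      hy0.le hy1.le
      (by rw [show (1:ℝ)/(1+y) * y = y/(1+y) from by ring, div_lt_one h1y]; linarith)
    have E2 := star (1/(1+y)) (1-y) (div_pos one_pos h1y) (by rw [div_le_one h1y]; linarith)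
      (by linarith) (by linarith)
      (by rw [show (1:ℝ)/(1+y) * (1-y) = (1-y)/(1+y) from by ring, div_lt_one h1y]; linarith)
    have E3 := star (1/2) (1-y) (by norm_num) (by norm_num) (by linarith) (by linarith)
      (by nlinarith)
    have E4 := star (1-y) (1/2) (by linarith) (by linarith) (by norm_num) (by norm_num)
      (by nlinarith)
    have hr1 : (1:ℝ)/(1+y) * y = y/(1+y) := by ring
    have hr2 : (1:ℝ) - y/(1+y) = 1/(1+y) := by
      field_simp
      ring
    have hr3 : (1:ℝ)/(1+y) * (1-y) / (1/(1+y)) = 1-y := by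
      rw [mul_comm, mul_div_assoc, div_self (one_div_ne_zero h1y.ne'), mul_one]
    rw [hr1, hr2, hr3] at E1
    have hq1 : (1:ℝ)/(1+y) * (1-y) = (1-y)/(1+y) := by ring
    have hq2 : (1:ℝ) - (1-y)/(1+y) = 2*y/(1+y) := by
      rw [eq_div_iff h1y.ne', sub_mul, div_mul_cancel₀ _ h1y.ne']
      ring
    have hq3 : (1:ℝ)/(1+y) * (1-(1-y)) / (2*y/(1+y)) = 1/2 := by
      rw [div_eq_iff (div_ne_zero (mul_ne_zero two_ne_zero hy0.ne') h1y.ne')]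
      field_simp
      ring
    rw [hq1, hq2, hq3, hfhalf, mul_zero, add_zero] at E2
    have hs1 : (1:ℝ)/2 * (1-y) = (1-y)/2 := by ring
    have hs2 : (1:ℝ) - (1-y)/2 = (1+y)/2 := by ring
    have hs3 : (1:ℝ)/2 * (1-(1-y)) / ((1+y)/2) = y/(1+y) := by
      rw [div_eq_div_iff (by linarith : (0:ℝ) < (1+y)/2).ne' h1y.ne']
      ring
    rw [hs1, hs2, hs3, hfhalf, zero_add] at E3
    have ht1' : (1-y) * ((1:ℝ)/2) = (1-y)/2 := by ring
    have ht3 : (1-y) * (1-(1:ℝ)/2) / ((1+y)/2) = (1-y)/(1+y) := by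
      rw [div_eq_div_iff (by linarith : (0:ℝ) < (1+y)/2).ne' h1y.ne']
      ring
    rw [ht1', hs2, ht3, hfhalf, mul_zero, add_zero] at E4
    have hq : ((1+y)/2)^α * ((1:ℝ)/(1+y))^α = ((1:ℝ)/2)^α := by
      rw [← Real.mul_rpow (by linarith) (le_of_lt (div_pos one_pos h1y))]
      congr 1
      field_simp
    have hw : ((1:ℝ)/2)^α * (2:ℝ)^α = 1 := by
      rw [hhalf]; exact inv_mul_cancel₀ hw_pos.ne'
    linear_combination ((2:ℝ)^α * ((1+y)/2)^α) * E1 - ((2:ℝ)^α * ((1+y)/2)^α) * E2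
      - (2:ℝ)^α * E3 + (2:ℝ)^α * E4
      + (2*(2:ℝ)^α * f (1-y) - (2:ℝ)^α * f y) * hq + (3 * f (1-y) - f y) * hw
  -- f vanishes on [0,1]
  have hfzero : ∀ z : ℝ, 0 ≤ z → z ≤ 1 → D [z, 1 - z] = 0 := by
    intro z hz0 hz1
    rcases eq_or_lt_of_le hz0 with h0 | h0
    · rw [← h0, show (1:ℝ) - 0 = 1 from by norm_num]; exact hf0
    rcases eq_or_lt_of_le hz1 with h1 | h1
    · rw [h1, show (1:ℝ) - 1 = 0 from by norm_num]; exact hf1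
    have h := hswap z h0 h1
    have h' := hswap (1 - z) (by linarith) (by linarith)
    rw [show (1:ℝ) - (1 - z) = z from by ring] at h'
    have hw2 : (2:ℝ) ^ α ≠ 2 := fun hcon => hα1 (hinj α 1 (by rw [Real.rpow_one]; exact hcon))
    have h4 : (2:ℝ) ^ (2:ℝ) = 4 := by
      have h42 : ((2:ℕ) : ℝ) = (2:ℝ) := by norm_num
      rw [← h42, Real.rpow_natCast]; norm_num
    have hw4 : (2:ℝ) ^ α ≠ 4 := fun hcon => hα2 (hinj α 2 (by rw [h4]; exact hcon))
    have hfac : (1 - (3 - (2:ℝ) ^ α) ^ 2) ≠ 0 := by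
      intro hcon
      have hz2 : ((2:ℝ) ^ α - 2) * ((2:ℝ) ^ α - 4) = 0 := by linear_combination -hcon
      rcases mul_eq_zero.mp hz2 with h2 | h2
      · exact hw2 (by linarith)
      · exact hw4 (by linarith)
    have hkey : (1 - (3 - (2:ℝ) ^ α) ^ 2) * f z = 0 := by
      linear_combination h + (3 - (2:ℝ) ^ α) * h'
    have hfz := (mul_eq_zero.mp hkey).resolve_left hfac
    simpa [hfdef] using hfz
  -- removing leading zeros
  have hzlist : ∀ (k : ℕ) (p : ℝ) (rest : List ℝ), 0 < p →
      IsStochastic (List.replicate k 0 ++ p :: rest) →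
      D (List.replicate k 0 ++ p :: rest) = D (p :: rest) := by
    intro k
    induction k with
    | zero =>
      intro p rest _ _
      simp
    | succ k ih =>
      intro p rest hp hs
      have hre : List.replicate (k+1) (0:ℝ) ++ p :: rest
          = List.replicate k 0 ++ 0 :: p :: rest := by
        rw [List.replicate_succ', List.append_assoc, List.singleton_append]
      rw [hre] at hs ⊢
      have e := hDGSA (List.replicate k 0) rest 0 p hs (by linarith)
      rw [zero_add] at e
      rw [zero_div, div_self hp.ne'] at e
      rw [e, hf0, mul_zero, add_zero]
      refine ih p rest hp ⟨fun y hy => hs.1 y ?_, ?_⟩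
      · rcases List.mem_append.mp hy with h | h
        · exact List.mem_append.mpr (Or.inl h)
        · exact List.mem_append.mpr (Or.inr (List.mem_cons_of_mem _ h))
      · have h2 := hs.2
        simp only [List.sum_append, List.sum_cons, zero_add] at h2 ⊢
        exact h2
  -- decomposition of a stochastic list
  have hdecomp : ∀ m : List ℝ, (∀ y ∈ m, (0:ℝ) ≤ y) → m.sum = 1 →
      ∃ k p rest, 0 < p ∧ m = List.replicate k 0 ++ p :: rest := by
    intro m
    induction m with
    | nil => intro _ hsum; simp at hsum
    | cons a t ih =>
      intro hnn hsum
      rcases eq_or_lt_of_le (hnn a (by simp)) with h0 | h0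
      · have hts : t.sum = 1 := by
          rw [List.sum_cons, ← h0, zero_add] at hsum; exact hsum
        obtain ⟨k, p, rest, hp, heq⟩ := ih (fun y hy => hnn y (List.mem_cons_of_mem _ hy)) hts
        refine ⟨k+1, p, rest, hp, ?_⟩
        rw [List.replicate_succ, List.cons_append, ← heq, ← h0]
      · exact ⟨0, a, t, h0, by simp⟩
  -- main induction
  have main : ∀ (n : ℕ) (m : List ℝ), m.length ≤ n → IsStochastic m → D m = 0 := by
    intro n
    induction n with
    | zero =>
      intro m hlen hs
      have hm : m = [] := List.length_eq_zero_iff.mp (Nat.le_zero.mp hlen)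
      rw [hm] at hs
      exact absurd hs.2 (by simp)
    | succ n ih =>
      intro m hlen hs
      obtain ⟨k, p, rest, hp, heq⟩ := hdecomp m hs.1 hs.2
      subst heq
      have hs' : IsStochastic (p :: rest) := by
        constructor
        · intro y hy
          exact hs.1 y (List.mem_append.mpr (Or.inr hy))
        · have h2 := hs.2
          simp only [List.sum_append, List.sum_replicate, smul_zero, List.sum_cons,
            zero_add] at h2 ⊢
          exact h2
      rw [hzlist k p rest hp hs]
      cases rest with
      | nil =>
        have hp1 : p = 1 := by
          have h2 := hs'.2
          simpa [List.sum_cons, List.sum_nil] using h2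
        rw [hp1]; exact hD1
      | cons q t =>
        have hq0 : 0 ≤ q := hs'.1 q (by simp)
        have hpq : (0:ℝ) < p + q := by linarith
        have hs'' : IsStochastic ([] ++ p :: q :: t) := by simpa using hs'
        have e := hDGSA [] t p q hs'' hpq
        simp only [List.nil_append] at e
        rw [e, show q/(p+q) = 1 - p/(p+q) from by
            rw [eq_sub_iff_add_eq, ← add_div,
              show q + p = p + q from by ring, div_self hpq.ne'],
          hfzero (p/(p+q)) (div_nonneg hp.le hpq.le) (by rw [div_le_one hpq]; linarith),
          mul_zero, add_zero]
        apply ih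
        · simp only [List.length_append, List.length_replicate, List.length_cons] at hlen ⊢
          omega
        · constructor
          · intro y hy
            rcases List.mem_cons.mp hy with rfl | hy'
            · linarith
            · exact hs'.1 y (List.mem_cons_of_mem _ (List.mem_cons_of_mem _ hy'))
          · have h2 := hs'.2
            simp only [List.sum_cons] at h2 ⊢
            linarith
  have hDl := main l.length l le_rfl hl
  simp only [hDdef] at hDl
  linarith
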